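/- Let A and B be n×n complex positive semidefinite matrices. Then det(A + B) ≥ det A + det B + (2^n − 2) · (det A · det B)^{1/2}, where all determinants are nonnegative real numbers. -/

import Mathlib

open Matrix
open scoped ComplexOrder

private lemma hartfiel_scalar (n : ℕ) (μ : Fin n → ℝ) (hμ : ∀ i, 0 ≤ μ i) :
    1 + (∏ i, μ i) + ((2 : ℝ) ^ n - 2) * Real.sqrt (∏ i, μ i) ≤ ∏ i, (1 + μ i) := by
  rcases Nat.eq_zero_or_pos n with hn | hn
  · subst hn
    simp [Real.sqrt_one]
    norm_num
  have hP : (0 : ℝ) ≤ ∏ i, μ i := Finset.prod_nonneg fun i _ => hμ i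
  set P : ℝ := ∏ i, μ i with hPdef
  have key : ∏ i, (1 + μ i) = ∑ t : Finset (Fin n), ∏ a ∈ t, μ a := by
    have := Fintype.prod_add μ (fun _ => (1 : ℝ))
    simp only [Finset.prod_const_one, mul_one] at this
    calc ∏ i, (1 + μ i) = ∏ i, (μ i + 1) := by simp [add_comm]
      _ = ∑ t : Finset (Fin n), ∏ a ∈ t, μ a := this
  set s : Finset (Finset (Fin n)) := {∅, Finset.univ} with hsdef
  haveI : Nonempty (Fin n) := Fin.pos_iff_nonempty.mp hn
  have hne : (∅ : Finset (Fin n)) ≠ Finset.univ := by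
    have : (Finset.univ : Finset (Fin n)).Nonempty := Finset.univ_nonempty
    exact fun h => (this.ne_empty h.symm)
  have hsub : s ⊆ Finset.univ := Finset.subset_univ _
  have hsplit : ∑ t : Finset (Fin n), ∏ a ∈ t, μ a =
      (∑ t ∈ Finset.univ \ s, ∏ a ∈ t, μ a) + ∑ t ∈ s, ∏ a ∈ t, μ a :=
    (Finset.sum_sdiff hsub).symm
  have hsum_s : ∑ t ∈ s, ∏ a ∈ t, μ a = 1 + P := by
    rw [hsdef, Finset.sum_pair hne]
    simp [hPdef]
  -- the pairing bound
  have hTmem : ∀ t : Finset (Fin n), t ∈ Finset.univ \ s ↔ (t ≠ ∅ ∧ t ≠ Finset.univ) := by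
    intro t; simp [hsdef]
  have hcompl_mem : ∀ t : Finset (Fin n), t ∈ Finset.univ \ s → tᶜ ∈ Finset.univ \ s := by
    intro t ht
    rw [hTmem] at ht ⊢
    constructor
    · simpa [Finset.compl_eq_empty_iff] using ht.2
    · simpa [Finset.compl_eq_univ_iff] using ht.1
  have hpair : ∀ t : Finset (Fin n), (∏ a ∈ t, μ a) + (∏ a ∈ tᶜ, μ a) ≥ 2 * Real.sqrt P := by
    intro t
    have hx : (0 : ℝ) ≤ ∏ a ∈ t, μ a := Finset.prod_nonneg fun i _ => hμ i
    have hy : (0 : ℝ) ≤ ∏ a ∈ tᶜ, μ a := Finset.prod_nonneg fun i _ => hμ i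
    have hxy : (∏ a ∈ t, μ a) * (∏ a ∈ tᶜ, μ a) = P := Finset.prod_mul_prod_compl t μ
    have : Real.sqrt P = Real.sqrt (∏ a ∈ t, μ a) * Real.sqrt (∏ a ∈ tᶜ, μ a) := by
      rw [← Real.sqrt_mul hx, hxy]
    nlinarith [sq_nonneg (Real.sqrt (∏ a ∈ t, μ a) - Real.sqrt (∏ a ∈ tᶜ, μ a)),
      Real.sq_sqrt hx, Real.sq_sqrt hy]
  have hreindex : ∑ t ∈ Finset.univ \ s, ∏ a ∈ tᶜ, μ a
      = ∑ t ∈ Finset.univ \ s, ∏ a ∈ t, μ a := by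
    refine Finset.sum_nbij' (fun t => tᶜ) (fun t => tᶜ) ?_ ?_ ?_ ?_ ?_
    · intro t ht; exact hcompl_mem t ht
    · intro t ht; exact hcompl_mem t ht
    · intro t _; exact compl_compl t
    · intro t _; exact compl_compl t
    · intro t _; rfl
  have hcard : (Finset.univ \ s).card = 2 ^ n - 2 := by
    rw [Finset.card_sdiff_of_subset hsub, Finset.card_univ, Fintype.card_finset, Fintype.card_fin,
      hsdef, Finset.card_pair hne]
  have h2le : 2 ≤ 2 ^ n := Nat.one_lt_two_pow_iff.mpr hn.ne'
  have hbound : ((2 : ℝ) ^ n - 2) * Real.sqrt P ≤ ∑ t ∈ Finset.univ \ s, ∏ a ∈ t, μ a := by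
    have h2 : 2 * ∑ t ∈ Finset.univ \ s, ∏ a ∈ t, μ a
        = ∑ t ∈ Finset.univ \ s, ((∏ a ∈ t, μ a) + (∏ a ∈ tᶜ, μ a)) := by
      rw [Finset.sum_add_distrib, hreindex]; ring
    have h3 : ∑ t ∈ Finset.univ \ s, ((∏ a ∈ t, μ a) + (∏ a ∈ tᶜ, μ a))
        ≥ ∑ t ∈ Finset.univ \ s, 2 * Real.sqrt P :=
      Finset.sum_le_sum fun t _ => hpair t
    rw [Finset.sum_const, hcard, nsmul_eq_mul] at h3
    have hcast : ((2 ^ n - 2 : ℕ) : ℝ) = (2 : ℝ) ^ n - 2 := by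
      push_cast [Nat.cast_sub h2le]; ring
    rw [hcast] at h3
    nlinarith [h3]
  rw [key, hsplit, hsum_s]
  linarith

private lemma psd_det_real {n : ℕ} {A : Matrix (Fin n) (Fin n) ℂ} (hA : A.PosSemidef) :
    A.det = (A.det.re : ℂ) ∧ 0 ≤ A.det.re := by
  have h := hA.1.det_eq_prod_eigenvalues
  have h2 : A.det = ((∏ i, hA.1.eigenvalues i : ℝ) : ℂ) := by rw [h]; push_cast; rfl
  have h3 : A.det.re = ∏ i, hA.1.eigenvalues i := by rw [h2, Complex.ofReal_re]
  refine ⟨by rw [h3, h2], ?_⟩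
  rw [h3]
  exact Finset.prod_nonneg fun i _ => hA.eigenvalues_nonneg i

open scoped MatrixOrder in
private lemma hartfiel_aux (n : ℕ) (A B : Matrix (Fin n) (Fin n) ℂ)
    (hA : A.PosSemidef) (hB : B.PosSemidef) (hd : A.det ≠ 0) :
    ∃ μ : Fin n → ℝ, (∀ i, 0 ≤ μ i) ∧
      (A + B).det = A.det * ((∏ i, (1 + μ i) : ℝ) : ℂ) ∧
      B.det = A.det * ((∏ i, μ i : ℝ) : ℂ) := by
  set S := CFC.sqrt A with hSdef
  have hS : S.PosSemidef := (CFC.sqrt_nonneg A).posSemidef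
  have hSS : S * S = A := CFC.sqrt_mul_sqrt_self A hA.nonneg
  have hdS : S.det ≠ 0 := fun h => hd (by rw [← hSS, det_mul, h, zero_mul])
  have hinv : S * S⁻¹ = 1 := mul_nonsing_inv S hdS.isUnit
  have hinv' : S⁻¹ * S = 1 := nonsing_inv_mul S hdS.isUnit
  set C := S⁻¹ * B * S⁻¹ with hCdef
  have hC : C.PosSemidef := by
    have h1 : (S⁻¹)ᴴ = S⁻¹ := hS.1.inv
    have := hB.conjTranspose_mul_mul_same (S⁻¹)
    rwa [h1] at this
  have hSCS : S * C * S = B := by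
    rw [hCdef]
    simp only [Matrix.mul_assoc]
    rw [hinv', Matrix.mul_one, ← Matrix.mul_assoc, hinv, Matrix.one_mul]
  have hABC : A + B = S * (1 + C) * S := by
    rw [Matrix.mul_add, Matrix.add_mul, Matrix.mul_one, hSS, hSCS]
  set μ := hC.1.eigenvalues with hμdef
  refine ⟨μ, hC.eigenvalues_nonneg, ?_, ?_⟩
  · have hU : (hC.1.eigenvectorUnitary : Matrix (Fin n) (Fin n) ℂ) *
        star (hC.1.eigenvectorUnitary : Matrix (Fin n) (Fin n) ℂ) = 1 :=
      (Matrix.mem_unitaryGroup_iff).mp (hC.1.eigenvectorUnitary).2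
    have hspec := hC.1.spectral_theorem
    rw [Unitary.conjStarAlgAut_apply] at hspec
    have h1C : 1 + C = (hC.1.eigenvectorUnitary : Matrix (Fin n) (Fin n) ℂ) *
        (1 + diagonal (RCLike.ofReal ∘ μ)) *
        star (hC.1.eigenvectorUnitary : Matrix (Fin n) (Fin n) ℂ) := by
      rw [Matrix.mul_add, Matrix.add_mul, Matrix.mul_one, hU, hμdef, ← hspec]
    have hdet1C : (1 + C).det = ((∏ i, (1 + μ i) : ℝ) : ℂ) := by
      rw [h1C, det_mul_right_comm, hU, Matrix.one_mul]
      have hdd : (1 : Matrix (Fin n) (Fin n) ℂ) + diagonal (RCLike.ofReal ∘ μ)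
          = diagonal (fun i => 1 + (μ i : ℂ)) := by
        rw [← Matrix.diagonal_one, Matrix.diagonal_add]
        rfl
      rw [hdd, det_diagonal]
      push_cast
      rfl
    rw [hABC, det_mul_right_comm, hSS, det_mul, hdet1C]
  · have hdetC : C.det = ((∏ i, μ i : ℝ) : ℂ) := by
      rw [hC.1.det_eq_prod_eigenvalues]; push_cast; rfl
    rw [← hSCS, det_mul_right_comm, hSS, det_mul, hdetC]

theorem det_add_ge_hartfiel (n : ℕ) (A B : Matrix (Fin n) (Fin n) ℂ)
    (hA : A.PosSemidef) (hB : B.PosSemidef) :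
    ((A + B).det).re ≥
      A.det.re + B.det.re + ((2 : ℝ) ^ n - 2) * Real.sqrt (A.det.re * B.det.re) := by
  obtain ⟨hAre, hAnn⟩ := psd_det_real hA
  obtain ⟨hBre, hBnn⟩ := psd_det_real hB
  by_cases hd : A.det.re = 0
  · -- degenerate case: det A = 0
    rw [hd]
    simp only [zero_add, zero_mul, Real.sqrt_zero, mul_zero, add_zero]
    by_cases hdB : B.det.re = 0
    · rw [hdB]
      obtain ⟨h1, h2⟩ := psd_det_real (hA.add hB)
      exact h2
    · have hBdet : B.det ≠ 0 := fun h => hdB (by rw [h]; rfl)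
      obtain ⟨μ, hμ, hsum, _⟩ := hartfiel_aux n B A hB hA hBdet
      have hcomm : A + B = B + A := add_comm A B
      rw [hcomm, hsum, hBre]
      rw [← Complex.ofReal_mul, Complex.ofReal_re, Complex.ofReal_re]
      have h1 : ∏ i, (1 : ℝ) ≤ ∏ i, (1 + μ i) :=
        Finset.prod_le_prod (by intro i _; norm_num) (fun i _ => by linarith [hμ i])
      simp only [Finset.prod_const_one] at h1
      have hBpos : 0 < B.det.re := lt_of_le_of_ne hBnn (Ne.symm hdB)
      nlinarith [mul_le_mul_of_nonneg_left h1 hBnn]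
  · have hAdet : A.det ≠ 0 := fun h => hd (by rw [h]; rfl)
    have hApos : 0 < A.det.re := lt_of_le_of_ne hAnn (Ne.symm hd)
    obtain ⟨μ, hμ, hsum, hprodB⟩ := hartfiel_aux n A B hA hB hAdet
    have hABre : (A + B).det.re = A.det.re * ∏ i, (1 + μ i) := by
      rw [hsum, hAre, ← Complex.ofReal_mul, Complex.ofReal_re, Complex.ofReal_re]
    have hBre' : B.det.re = A.det.re * ∏ i, μ i := by
      rw [hprodB, hAre, ← Complex.ofReal_mul, Complex.ofReal_re]
      rw [Complex.ofReal_re]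
    have hsqrt : Real.sqrt (A.det.re * B.det.re) = A.det.re * Real.sqrt (∏ i, μ i) := by
      rw [hBre', ← mul_assoc, show A.det.re * A.det.re = A.det.re ^ 2 by ring,
        Real.sqrt_mul (sq_nonneg _), Real.sqrt_sq hAnn]
    have hkey := hartfiel_scalar n μ hμ
    rw [hABre, hsqrt, hBre']
    nlinarith [hkey, hApos, mul_le_mul_of_nonneg_left hkey hAnn]
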